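/- Let F be a field and let E be the Weierstrass curve y² + a₁xy + a₃y = x³ + a₂x² + a₄x over F (so the coefficient a₆ is 0 and S = (0,0) lies on E); assume S is a nonsingular point of E. Then there exist constants a, β, γ ∈ F, depending only on the curve E and independent both of the integer parameter h and of the translating point M, such that for every point M in the group of points of E and every h ∈ ℤ the following holds: if the points M + (h−1)S, M + hS and M + (h+1)S are all affine points with respective x-coordinates x(h−1), x(h), x(h+1), each nonzero, then writing e(j) = −x(j) one has e(h−1)·e(h)²·e(h+1) = a·e(h) − β and (e(h−1) + e(h+1))·e(h)² = γ·e(h) − a. -/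

import Mathlib

open WeierstrassCurve

open Classical in
theorem elliptic_basic_identities {F : Type*} [Field F] (a₁ a₂ a₃ a₄ : F)
    (E : WeierstrassCurve.Affine F)
    (hE : E = { a₁ := a₁, a₂ := a₂, a₃ := a₃, a₄ := a₄, a₆ := 0 })
    (hS : E.Nonsingular 0 0) :
    ∃ a β γ : F, ∀ (M : E.Point) (h : ℤ)
      (x₀ y₀ x₁ y₁ x₂ y₂ : F)
      (h₀ : E.Nonsingular x₀ y₀) (h₁ : E.Nonsingular x₁ y₁) (h₂ : E.Nonsingular x₂ y₂),
      M + (h - 1) • (WeierstrassCurve.Affine.Point.some _ _ hS) =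
          WeierstrassCurve.Affine.Point.some _ _ h₀ →
      M + h • (WeierstrassCurve.Affine.Point.some _ _ hS) =
          WeierstrassCurve.Affine.Point.some _ _ h₁ →
      M + (h + 1) • (WeierstrassCurve.Affine.Point.some _ _ hS) =
          WeierstrassCurve.Affine.Point.some _ _ h₂ →
      x₀ ≠ 0 → x₁ ≠ 0 → x₂ ≠ 0 →
      (-x₀) * (-x₁) ^ 2 * (-x₂) = a * (-x₁) - β ∧
        ((-x₀) + (-x₂)) * (-x₁) ^ 2 = γ * (-x₁) - a := by
  refine ⟨a₃ ^ 2, a₂ * a₃ ^ 2 - a₄ ^ 2 - a₁ * a₃ * a₄, 2 * a₄ + a₁ * a₃, ?_⟩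
  intro M h x₀ y₀ x₁ y₁ x₂ y₂ h₀ h₁ h₂ eqm eq eqp hx₀ hx₁ hx₂
  set S : E.Point := WeierstrassCurve.Affine.Point.some _ _ hS with hSdef
  -- P + S
  have hp : WeierstrassCurve.Affine.Point.some _ _ h₂ =
      WeierstrassCurve.Affine.Point.some _ _ h₁ + S := by
    rw [← eq, ← eqp]
    have : (h + 1) • S = h • S + S := by
      rw [add_zsmul, one_zsmul]
    rw [this, add_assoc]
  have hm : WeierstrassCurve.Affine.Point.some _ _ h₀ =
      WeierstrassCurve.Affine.Point.some _ _ h₁ + (-S) := by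
    rw [← eq, ← eqm]
    have : (h - 1) • S = h • S + (-S) := by
      rw [sub_zsmul, one_zsmul]
    rw [this, add_assoc]
  rw [hSdef, WeierstrassCurve.Affine.Point.neg_some] at hm
  rw [hSdef] at hp
  rw [WeierstrassCurve.Affine.Point.add_of_X_ne hx₁] at hp
  rw [WeierstrassCurve.Affine.Point.add_of_X_ne hx₁] at hm
  have heq : E.Equation x₁ y₁ := h₁.1
  rw [hE] at heq
  rw [WeierstrassCurve.Affine.equation_iff] at heq
  simp only at heq
  injection hp with hx2 hy2
  injection hm with hx0 hy0
  have hs1 : E.slope x₁ 0 y₁ 0 = y₁ / x₁ := by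
    rw [WeierstrassCurve.Affine.slope_of_X_ne hx₁]
    simp
  have hs0 : E.slope x₁ 0 y₁ (E.negY 0 0) = (y₁ + a₃) / x₁ := by
    rw [WeierstrassCurve.Affine.slope_of_X_ne hx₁]
    rw [hE]
    simp only [WeierstrassCurve.Affine.negY]
    simp
    try ring
  rw [hs1] at hx2
  rw [hs0] at hx0
  rw [hE] at hx2 hx0
  simp only [WeierstrassCurve.Affine.addX] at hx2 hx0
  subst hx2 hx0
  have e2 : (y₁ / x₁) ^ 2 + a₁ * (y₁ / x₁) - a₂ - x₁ - 0
      = (a₄ * x₁ - a₃ * y₁) / x₁ ^ 2 := by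
    field_simp
    linear_combination heq
  have e0 : ((y₁ + a₃) / x₁) ^ 2 + a₁ * ((y₁ + a₃) / x₁) - a₂ - x₁ - 0
      = (a₄ * x₁ + a₃ * y₁ + a₃ ^ 2 + a₁ * a₃ * x₁) / x₁ ^ 2 := by
    field_simp
    linear_combination heq
  rw [e2, e0]
  constructor
  · field_simp
    linear_combination (-a₃ ^ 2) * heq
  · field_simp
    ring
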